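/- Let T = ν T' be an unnormalized stochastic channel on d×d complex matrices with parameters ν, λ ∈ [0,1]. Then ‖T − id_d‖_◇ ≤ 1 + ν − 2νλ. -/

import Mathlib

open scoped Kronecker ComplexOrder
open Matrix

/-- The positive semidefinite square root of a positive semidefinite matrix
(junk value `0` on matrices that are not positive semidefinite). -/
noncomputable def psdSqrt {n : Type*} [Fintype n] [DecidableEq n] (A : Matrix n n ℂ) :
    Matrix n n ℂ :=
  letI := Classical.propDecidable A.PosSemidef
  if h : A.PosSemidef then
    h.1.eigenvectorUnitary.1 * diagonal ((↑) ∘ (√·) ∘ h.1.eigenvalues) *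
      (star h.1.eigenvectorUnitary : Matrix n n ℂ) else 0

/-- The trace norm `‖A‖₁ = tr √(A Aᴴ)`. -/
noncomputable def traceNorm {n : Type*} [Fintype n] [DecidableEq n] (A : Matrix n n ℂ) : ℝ :=
  (psdSqrt (A * Aᴴ)).trace.re

/-- The fidelity `F(A,B) = ‖√A √B‖₁²` between positive semidefinite matrices. -/
noncomputable def fidelity {n : Type*} [Fintype n] [DecidableEq n] (A B : Matrix n n ℂ) : ℝ :=
  traceNorm (psdSqrt A * psdSqrt B) ^ 2

/-- The Choi matrix `J(Φ) = (1/n) Σ_{j,k} E_{jk} ⊗ Φ(E_{jk})` of a map on matrices. -/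
noncomputable def choi {n m : Type*} [Fintype n] [DecidableEq n] [Fintype m]
    (Φ : Matrix n n ℂ → Matrix m m ℂ) : Matrix (n × m) (n × m) ℂ :=
  (Fintype.card n : ℂ)⁻¹ • ∑ j : n, ∑ k : n,
    (Matrix.single j k (1 : ℂ)) ⊗ₖ Φ (Matrix.single j k (1 : ℂ))

/-- The extension `(id_F ⊗ Φ)` of a map on matrices by an ancilla of dimension `F`. -/
def tensorExt (F : ℕ) {n m : Type*} (Φ : Matrix n n ℂ → Matrix m m ℂ)
    (ρ : Matrix (Fin F × n) (Fin F × n) ℂ) : Matrix (Fin F × m) (Fin F × m) ℂ :=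
  Matrix.of fun p q => Φ (Matrix.of fun i j => ρ (p.1, i) (q.1, j)) p.2 q.2

/-- The diamond norm `‖Φ‖◇`: the supremum of `‖(id_F ⊗ Φ)(ρ)‖₁` over all finite ancilla
dimensions `F` and density matrices `ρ`. -/
noncomputable def diamondNorm {n m : Type*} [Fintype n] [DecidableEq n] [Fintype m]
    [DecidableEq m] (Φ : Matrix n n ℂ → Matrix m m ℂ) : ℝ :=
  sSup { x : ℝ | ∃ (F : ℕ) (ρ : Matrix (Fin F × n) (Fin F × n) ℂ),
    ρ.PosSemidef ∧ ρ.trace = 1 ∧ x = traceNorm (tensorExt F Φ ρ) }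

section Aux

set_option linter.unusedSectionVars false
set_option maxHeartbeats 1000000

variable {n : Type*} [Fintype n] [DecidableEq n]

open scoped MatrixOrder in
lemma psdSqrt_eq_cfc {A : Matrix n n ℂ} (hA : A.PosSemidef) : psdSqrt A = CFC.sqrt A := by
  rw [psdSqrt, dif_pos hA, CFC.sqrt_eq_cfc, cfc_nnreal_eq_real _ A, hA.1.cfc_eq]
  simp only [IsHermitian.cfc, Unitary.conjStarAlgAut_apply]
  congr 3
  funext i
  simp [Real.coe_sqrt, Real.coe_toNNReal', hA.eigenvalues_nonneg i]

lemma psd_diag_nonneg {A : Matrix n n ℂ} (hA : A.PosSemidef) (i : n) : 0 ≤ A i i := by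
  exact hA.diag_nonneg

lemma psd_trace_re_nonneg {A : Matrix n n ℂ} (hA : A.PosSemidef) : 0 ≤ A.trace.re := by
  rw [Matrix.trace, Complex.re_sum]
  exact Finset.sum_nonneg fun i _ => (Complex.le_def.mp (psd_diag_nonneg hA i)).1

lemma psd_smul {A : Matrix n n ℂ} (hA : A.PosSemidef) {r : ℝ} (hr : 0 ≤ r) :
    (r • A).PosSemidef := by
  refine ⟨?_, fun x => ?_⟩
  · unfold Matrix.IsHermitian
    rw [conjTranspose_smul_non_comm, hA.1.eq] <;> simp
  · exact (hA.smul hr).2 x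

lemma psd_sum {ι : Type*} (s : Finset ι) (f : ι → Matrix n n ℂ)
    (h : ∀ i ∈ s, (f i).PosSemidef) : (∑ i ∈ s, f i).PosSemidef := by
  classical
  induction s using Finset.induction with
  | empty => simpa using Matrix.PosSemidef.zero
  | insert _ _ hx ih =>
    rw [Finset.sum_insert hx]
    exact (h _ (Finset.mem_insert_self _ _)).add (ih fun i hi => h i (Finset.mem_insert_of_mem hi))

open scoped MatrixOrder in
lemma trace_mul_psd_re_nonneg {A B : Matrix n n ℂ} (hA : A.PosSemidef) (hB : B.PosSemidef) :
    0 ≤ ((A * B).trace).re := by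
  have h1 : (A * B).trace = (CFC.sqrt B * A * CFC.sqrt B).trace := by
    conv_lhs => rw [← CFC.sqrt_mul_sqrt_self B hB.nonneg]
    rw [← mul_assoc, trace_mul_cycle]
  rw [h1]
  have h2 : (CFC.sqrt B * A * CFC.sqrt B).PosSemidef := by
    have := hA.mul_mul_conjTranspose_same (CFC.sqrt B)
    rwa [(CFC.sqrt_nonneg B).posSemidef.1.eq] at this
  exact psd_trace_re_nonneg h2

open scoped MatrixOrder in
lemma traceNorm_le_of_decomp {X P Q : Matrix n n ℂ} (hP : P.PosSemidef) (hQ : Q.PosSemidef)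
    (hXPQ : X = P - Q) : traceNorm X ≤ P.trace.re + Q.trace.re := by
  have hX : X.IsHermitian := by rw [hXPQ]; exact hP.1.sub hQ.1
  set U : Matrix n n ℂ := (hX.eigenvectorUnitary : Matrix n n ℂ) with hUdef
  have hU1 : Uᴴ * U = 1 := by
    simpa [Matrix.star_eq_conjTranspose] using (hX.eigenvectorUnitary.2).1
  have hU2 : U * Uᴴ = 1 := by
    simpa [Matrix.star_eq_conjTranspose] using (hX.eigenvectorUnitary.2).2
  set ev : n → ℝ := hX.eigenvalues with hev
  have conj_psd : ∀ c : n → ℝ, (∀ i, 0 ≤ c i) →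
      (U * diagonal (fun i => (c i : ℂ)) * Uᴴ).PosSemidef := by
    intro c hc
    refine Matrix.PosSemidef.mul_mul_conjTranspose_same ?_ U
    refine Matrix.posSemidef_diagonal_iff.mpr fun i => ?_
    exact_mod_cast Complex.zero_le_real.mpr (hc i)
  have conj_mul : ∀ a b : n → ℂ, (U * diagonal a * Uᴴ) * (U * diagonal b * Uᴴ)
      = U * diagonal (fun i => a i * b i) * Uᴴ := by
    intro a b
    have : (U * diagonal a * Uᴴ) * (U * diagonal b * Uᴴ)
        = U * (diagonal a * (Uᴴ * U) * diagonal b) * Uᴴ := by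
      simp only [mul_assoc]
    rw [this, hU1, mul_one, diagonal_mul_diagonal]
  have conj_trace : ∀ a : n → ℂ, (U * diagonal a * Uᴴ).trace = ∑ i, a i := by
    intro a
    rw [trace_mul_cycle, hU1, one_mul, trace_diagonal]
  have hspec : X = U * diagonal (fun i => (ev i : ℂ)) * Uᴴ := by
    simpa [Function.comp_def, Matrix.star_eq_conjTranspose, ← hUdef, ← hev] using hX.spectral_theorem
  have habs : traceNorm X = ∑ i, |ev i| := by
    have hXX : X * Xᴴ = U * diagonal (fun i => ((ev i : ℂ) * (ev i : ℂ))) * Uᴴ := by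
      rw [hX.eq]
      conv_lhs => rw [hspec]
      rw [conj_mul]
    have hRpsd : (U * diagonal (fun i => ((|ev i| : ℝ) : ℂ)) * Uᴴ).PosSemidef :=
      conj_psd _ fun i => abs_nonneg _
    have hXXpsd : (X * Xᴴ).PosSemidef := Matrix.posSemidef_self_mul_conjTranspose X
    have hRsq : (U * diagonal (fun i => ((|ev i| : ℝ) : ℂ)) * Uᴴ) ^ 2 = X * Xᴴ := by
      have hfun : (fun i => ((|ev i| : ℝ) : ℂ) * ((|ev i| : ℝ) : ℂ))
          = fun i => ((ev i : ℂ) * (ev i : ℂ)) := by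
        funext i
        rw [← Complex.ofReal_mul, ← Complex.ofReal_mul, abs_mul_abs_self]
      rw [pow_two, conj_mul, hfun, hXX]
    have := (CFC.sqrt_unique (a := X * Xᴴ) (by rw [← pow_two]; exact hRsq) hRpsd.nonneg).symm
    rw [traceNorm, psdSqrt_eq_cfc hXXpsd, ← this, conj_trace]
    rw [Complex.re_sum]
    simp
  set s : n → ℝ := fun i => if 0 ≤ ev i then 1 else -1 with hs
  set S : Matrix n n ℂ := U * diagonal (fun i => (s i : ℂ)) * Uᴴ with hS
  have hSX : ((S * X).trace).re = ∑ i, |ev i| := by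
    conv_lhs => rw [hspec]
    rw [hS, conj_mul, conj_trace, Complex.re_sum]
    congr 1; funext i
    by_cases h : 0 ≤ ev i
    · simp [hs, h, abs_of_nonneg h, ← Complex.ofReal_mul]
    · simp [hs, h, abs_of_neg (not_le.mp h), ← Complex.ofReal_mul]
  have hone : (1 : Matrix n n ℂ) = U * diagonal (fun _ => (1:ℂ)) * Uᴴ := by
    rw [diagonal_one, mul_one, hU2]
  have honesub : (1 : Matrix n n ℂ) - S = U * diagonal (fun i => ((1 - s i : ℝ) : ℂ)) * Uᴴ := by
    conv_lhs => rw [hone, hS]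
    rw [← sub_mul, ← mul_sub, diagonal_sub]
    have : (fun i => (1:ℂ) - (s i : ℂ)) = fun i => ((1 - s i : ℝ) : ℂ) := by
      funext i; push_cast; ring
    rw [← this]
  have honeadd : (1 : Matrix n n ℂ) + S = U * diagonal (fun i => ((1 + s i : ℝ) : ℂ)) * Uᴴ := by
    conv_lhs => rw [hone, hS]
    rw [← add_mul, ← mul_add, diagonal_add]
    have : (fun i => (1:ℂ) + (s i : ℂ)) = fun i => ((1 + s i : ℝ) : ℂ) := by
      funext i; push_cast; ring
    rw [← this]
  have hsub_psd : ((1 : Matrix n n ℂ) - S).PosSemidef := by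
    rw [honesub]; refine conj_psd _ fun i => ?_
    by_cases h : 0 ≤ ev i <;> simp [hs, h]
  have hadd_psd : ((1 : Matrix n n ℂ) + S).PosSemidef := by
    rw [honeadd]; refine conj_psd _ fun i => ?_
    by_cases h : 0 ≤ ev i <;> simp [hs, h]
  have hSP : ((S * P).trace).re ≤ P.trace.re := by
    have h0 : 0 ≤ ((((1 : Matrix n n ℂ) - S) * P).trace).re :=
      trace_mul_psd_re_nonneg hsub_psd hP
    rw [sub_mul, one_mul, trace_sub, Complex.sub_re] at h0
    linarith
  have hSQ : -(Q.trace.re) ≤ ((S * Q).trace).re := by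
    have h0 : 0 ≤ ((((1 : Matrix n n ℂ) + S) * Q).trace).re :=
      trace_mul_psd_re_nonneg hadd_psd hQ
    rw [add_mul, one_mul, trace_add, Complex.add_re] at h0
    linarith
  have hsplit : ((S * X).trace).re = ((S * P).trace).re - ((S * Q).trace).re := by
    rw [hXPQ, mul_sub, trace_sub, Complex.sub_re]
  rw [habs, ← hSX, hsplit]
  linarith

lemma kron_conj_apply {F d : ℕ} (M : Matrix (Fin d) (Fin d) ℂ)
    (ρ : Matrix (Fin F × Fin d) (Fin F × Fin d) ℂ) (p q : Fin F × Fin d) :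
    (((1 : Matrix (Fin F) (Fin F) ℂ) ⊗ₖ M) * ρ * ((1 : Matrix (Fin F) (Fin F) ℂ) ⊗ₖ M)ᴴ) p q
      = (M * (Matrix.of fun i j => ρ (p.1, i) (q.1, j)) * Mᴴ) p.2 q.2 := by
  simp only [Matrix.mul_apply, Fintype.sum_prod_type, Matrix.conjTranspose_apply,
    Matrix.kroneckerMap_apply, Matrix.one_apply, Matrix.of_apply, ite_mul, mul_ite,
    one_mul, zero_mul, mul_zero, mul_one, apply_ite (starRingEnd ℂ), map_zero]
  rw [Finset.sum_comm]
  simp [Finset.sum_ite_eq, Finset.sum_ite_eq', apply_ite (starRingEnd ℂ)]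

lemma one_kron_conjTranspose {F d : ℕ} (M : Matrix (Fin d) (Fin d) ℂ) :
    ((1 : Matrix (Fin F) (Fin F) ℂ) ⊗ₖ M)ᴴ = (1 : Matrix (Fin F) (Fin F) ℂ) ⊗ₖ Mᴴ := by
  ext p q
  simp [Matrix.conjTranspose_apply, Matrix.kroneckerMap_apply, Matrix.one_apply,
    apply_ite (starRingEnd ℂ), eq_comm]

lemma one_kron_sum {F d : ℕ} {ι : Type*} (t : Finset ι) (M : ι → Matrix (Fin d) (Fin d) ℂ) :
    (1 : Matrix (Fin F) (Fin F) ℂ) ⊗ₖ (∑ k ∈ t, M k)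
      = ∑ k ∈ t, (1 : Matrix (Fin F) (Fin F) ℂ) ⊗ₖ M k := by
  ext p q
  simp [Matrix.kroneckerMap_apply, Matrix.sum_apply, Finset.mul_sum]

lemma one_kron_sub {F d : ℕ} (M N : Matrix (Fin d) (Fin d) ℂ) :
    (1 : Matrix (Fin F) (Fin F) ℂ) ⊗ₖ (M - N)
      = (1 : Matrix (Fin F) (Fin F) ℂ) ⊗ₖ M - (1 : Matrix (Fin F) (Fin F) ℂ) ⊗ₖ N := by
  ext p q
  simp [Matrix.kroneckerMap_apply, Matrix.sub_apply, mul_sub]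

lemma real_smul_mat {m : Type*} (r : ℝ) (A : Matrix m m ℂ) : r • A = (r : ℂ) • A := by
  ext p q
  simp [Complex.real_smul]

end Aux

set_option maxHeartbeats 1000000

/-- For an unnormalized stochastic channel `T = ν T'` on `d × d` matrices,
`‖T − id‖◇ ≤ 1 + ν − 2νλ`. -/
theorem diamondNorm_unnormalized_stochastic_le
    {d : ℕ} (hd : 0 < d) {K : ℕ} (ν lam : ℝ)
    (hν : ν ∈ Set.Icc (0 : ℝ) 1) (hlam : lam ∈ Set.Icc (0 : ℝ) 1)
    (B : Fin (K + 1) → Matrix (Fin d) (Fin d) ℂ)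
    (hTP : ∑ k, (B k)ᴴ * B k = 1)
    (hOrth : ∀ k l, k ≠ l → ((B k)ᴴ * B l).trace = 0)
    (hB0 : B 0 = (Real.sqrt lam : ℂ) • (1 : Matrix (Fin d) (Fin d) ℂ))
    (T : Matrix (Fin d) (Fin d) ℂ → Matrix (Fin d) (Fin d) ℂ)
    (hT : ∀ ρ, T ρ = ν • ∑ k, B k * ρ * (B k)ᴴ) :
    diamondNorm (fun ρ => T ρ - ρ) ≤ 1 + ν - 2 * ν * lam := by
  obtain ⟨hν0, hν1⟩ := hν
  obtain ⟨hl0, hl1⟩ := hlam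
  have hbound : (0:ℝ) ≤ 1 + ν - 2 * ν * lam := by nlinarith
  apply Real.sSup_le _ hbound
  rintro x ⟨F, ρ, hρ, htr, rfl⟩
  set C : Fin (K + 1) → Matrix (Fin F × Fin d) (Fin F × Fin d) ℂ :=
    fun k => (1 : Matrix (Fin F) (Fin F) ℂ) ⊗ₖ B k with hC
  -- extension formula
  have hext : tensorExt F (fun σ => T σ - σ) ρ = ((ν : ℂ) • ∑ k, C k * ρ * (C k)ᴴ) - ρ := by
    ext p q
    simp only [tensorExt, Matrix.of_apply, hT, Matrix.sub_apply, Matrix.smul_apply,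
      Matrix.sum_apply, hC]
    rw [Complex.real_smul]
    congr 2
    exact Finset.sum_congr rfl fun k _ => (kron_conj_apply (B k) ρ p q).symm
  -- the k = 0 term
  have hC0 : C 0 = (Real.sqrt lam : ℂ) • (1 : Matrix (Fin F × Fin d) (Fin F × Fin d) ℂ) := by
    show (1 : Matrix (Fin F) (Fin F) ℂ) ⊗ₖ B 0 = _
    rw [hB0, Matrix.kronecker_smul, Matrix.one_kronecker_one]
  have hterm0 : C 0 * ρ * (C 0)ᴴ = (lam : ℂ) • ρ := by
    rw [hC0]
    rw [Matrix.conjTranspose_smul, Matrix.conjTranspose_one]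
    simp only [Matrix.smul_mul, Matrix.mul_smul, Matrix.mul_one, Matrix.one_mul]
    rw [smul_smul, Complex.star_def, Complex.conj_ofReal, ← Complex.ofReal_mul,
      Real.mul_self_sqrt hl0]
  -- split off the k = 0 term
  have hsum : ∑ k : Fin (K + 1), C k * ρ * (C k)ᴴ
      = (lam : ℂ) • ρ + ∑ k : Fin K, C k.succ * ρ * (C k.succ)ᴴ := by
    rw [Fin.sum_univ_succ, hterm0]
  set P : Matrix (Fin F × Fin d) (Fin F × Fin d) ℂ :=
    (ν : ℂ) • ∑ k : Fin K, C k.succ * ρ * (C k.succ)ᴴ with hP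
  set Q : Matrix (Fin F × Fin d) (Fin F × Fin d) ℂ := ((1 - ν * lam : ℝ) : ℂ) • ρ with hQ
  have hdecomp : tensorExt F (fun σ => T σ - σ) ρ = P - Q := by
    rw [hext, hsum, smul_add, smul_smul, hP, hQ]
    have hc : ((1 - ν * lam : ℝ) : ℂ) = 1 - (ν : ℂ) * (lam : ℂ) := by push_cast; ring
    rw [hc]
    module
  -- positive semidefiniteness
  have hPpsd : P.PosSemidef := by
    rw [hP, ← real_smul_mat]
    exact psd_smul (psd_sum _ _ fun k _ => hρ.mul_mul_conjTranspose_same (C k.succ)) hν0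
  have hQpsd : Q.PosSemidef := by
    rw [hQ, ← real_smul_mat]
    exact psd_smul hρ (by nlinarith)
  -- trace computations
  have hB00 : (B 0)ᴴ * B 0 = (lam : ℂ) • 1 := by
    rw [hB0, Matrix.conjTranspose_smul, Matrix.conjTranspose_one]
    rw [Matrix.smul_mul, Matrix.mul_smul, Matrix.one_mul, smul_smul,
      Complex.star_def, Complex.conj_ofReal, ← Complex.ofReal_mul, Real.mul_self_sqrt hl0]
  have hsumB : ∑ k : Fin K, (B k.succ)ᴴ * B k.succ
      = (1 : Matrix (Fin d) (Fin d) ℂ) - (lam : ℂ) • 1 := by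
    have h := hTP
    rw [Fin.sum_univ_succ, hB00] at h
    exact eq_sub_of_add_eq' h
  have hCkk : ∀ k : Fin K, (C k.succ)ᴴ * C k.succ
      = (1 : Matrix (Fin F) (Fin F) ℂ) ⊗ₖ ((B k.succ)ᴴ * B k.succ) := by
    intro k
    show ((1 : Matrix (Fin F) (Fin F) ℂ) ⊗ₖ B k.succ)ᴴ * ((1 : Matrix (Fin F) (Fin F) ℂ) ⊗ₖ B k.succ) = _
    rw [one_kron_conjTranspose, ← Matrix.mul_kronecker_mul, Matrix.one_mul]
  have hsumC : ∑ k : Fin K, (C k.succ)ᴴ * C k.succ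
      = (1 : Matrix (Fin F × Fin d) (Fin F × Fin d) ℂ) - (lam : ℂ) • 1 := by
    calc ∑ k : Fin K, (C k.succ)ᴴ * C k.succ
        = ∑ k : Fin K, (1 : Matrix (Fin F) (Fin F) ℂ) ⊗ₖ ((B k.succ)ᴴ * B k.succ) := by
          exact Finset.sum_congr rfl fun k _ => hCkk k
      _ = (1 : Matrix (Fin F) (Fin F) ℂ) ⊗ₖ (∑ k : Fin K, (B k.succ)ᴴ * B k.succ) :=
          (one_kron_sum _ _).symm
      _ = (1 : Matrix (Fin F) (Fin F) ℂ) ⊗ₖ ((1 : Matrix (Fin d) (Fin d) ℂ) - (lam : ℂ) • 1) := by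
          rw [hsumB]
      _ = (1 : Matrix (Fin F × Fin d) (Fin F × Fin d) ℂ) - (lam : ℂ) • 1 := by
          rw [one_kron_sub, Matrix.kronecker_smul, Matrix.one_kronecker_one]
  have hPtr : P.trace = (ν : ℂ) * (1 - lam) := by
    rw [hP, Matrix.trace_smul, Matrix.trace_sum]
    have h1 : ∀ k : Fin K, (C k.succ * ρ * (C k.succ)ᴴ).trace
        = ((C k.succ)ᴴ * C k.succ * ρ).trace := by
      intro k
      rw [Matrix.trace_mul_cycle]
    rw [Finset.sum_congr rfl fun k _ => h1 k]
    have h2 : ∑ k : Fin K, ((C k.succ)ᴴ * C k.succ * ρ).trace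
        = ((∑ k : Fin K, (C k.succ)ᴴ * C k.succ) * ρ).trace := by
      rw [Finset.sum_mul, Matrix.trace_sum]
    rw [h2, hsumC, Matrix.sub_mul, Matrix.one_mul, Matrix.trace_sub, Matrix.smul_mul,
      Matrix.one_mul, Matrix.trace_smul, htr]
    simp [smul_eq_mul]
  have hQtr : Q.trace = ((1 - ν * lam : ℝ) : ℂ) := by
    rw [hQ, Matrix.trace_smul, htr, smul_eq_mul, mul_one]
  have hfinal := traceNorm_le_of_decomp hPpsd hQpsd hdecomp
  have hPre : P.trace.re = ν * (1 - lam) := by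
    rw [hPtr]
    have : (ν : ℂ) * (1 - lam) = ((ν * (1 - lam) : ℝ) : ℂ) := by push_cast; ring
    rw [this, Complex.ofReal_re]
  have hQre : Q.trace.re = 1 - ν * lam := by
    rw [hQtr, Complex.ofReal_re]
  rw [hPre, hQre] at hfinal
  linarith [hfinal]
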